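/- Let W₁, …, W_l (2 ≤ l ≤ r) be pairwise distinct (r−1)-dimensional subspaces of F^r with dim(⋂ᵢ Wᵢ) = r − l. Then there exists a linearly independent set U of r vectors in F^r that is an exact spanner of W₁, …, W_l: each Wᵢ is spanned by exactly r−1 vectors of U. -/

import Mathlib

open Module Submodule

lemma auxA {F : Type*} [Field F] {r l : ℕ} (hr : 1 ≤ r)
    (W : Fin l → Submodule F (Fin r → F))
    (hdim : ∀ i, Module.finrank F (W i) = r - 1) :
    ∀ s : Finset (Fin l), r ≤ Module.finrank F ↥(⨅ j ∈ s, W j) + s.card := by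
  intro s
  induction s using Finset.induction_on with
  | empty =>
      simp only [Finset.card_empty, add_zero]
      rw [show (⨅ j ∈ (∅ : Finset (Fin l)), W j) = ⊤ by simp, finrank_top,
        Module.finrank_fin_fun]
  | @insert a s ha ih =>
      rw [Finset.iInf_insert, Finset.card_insert_of_notMem ha]
      have h1 := Submodule.finrank_sup_add_finrank_inf_eq (W a) (⨅ j ∈ s, W j)
      have h2 : Module.finrank F ↥(W a ⊔ ⨅ j ∈ s, W j) ≤ r := by
        have := Submodule.finrank_le (W a ⊔ ⨅ j ∈ s, W j)
        rwa [Module.finrank_fin_fun] at this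
      have h3 := hdim a
      omega

lemma auxW {F : Type*} [Field F] (r l : ℕ) (h2 : 2 ≤ l) (hlr : l ≤ r)
    (W : Fin l → Submodule F (Fin r → F))
    (hdim : ∀ i, Module.finrank F (W i) = r - 1)
    (hint : Module.finrank F ↥(⨅ i, W i) = r - l) :
    ∀ i, ∃ w, w ∈ (⨅ j ∈ Finset.univ.erase i, W j) ∧ w ∉ W i := by
  intro i
  rw [← SetLike.not_le_iff_exists]
  intro hle
  set T := ⨅ j ∈ Finset.univ.erase i, W j with hT
  have hTle : T ≤ ⨅ j, W j := by
    apply le_iInf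
    intro j
    by_cases hji : j = i
    · exact hji ▸ hle
    · exact biInf_le W (Finset.mem_erase.2 ⟨hji, Finset.mem_univ j⟩)
  have h1 : Module.finrank F ↥T ≤ r - l :=
    hint ▸ Submodule.finrank_mono hTle
  have h3 := auxA (by omega) W hdim (Finset.univ.erase i)
  rw [← hT] at h3
  rw [Finset.card_erase_of_mem (Finset.mem_univ i), Finset.card_univ,
    Fintype.card_fin] at h3
  omega

/-- Full sub-rate decodability for `l` hyperplane sinks: there is a linearly
independent exact spanner of `r` vectors, each hyperplane being spanned by
exactly `r - 1` of them. -/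
theorem stmt14 {F : Type*} [Field F] [Infinite F] (r l : ℕ) (h2 : 2 ≤ l) (hlr : l ≤ r)
    (W : Fin l → Submodule F (Fin r → F))
    (hdist : ∀ i j : Fin l, i ≠ j → W i ≠ W j)
    (hdim : ∀ i, Module.finrank F (W i) = r - 1)
    (hint : Module.finrank F ↥(⨅ i, W i) = r - l) :
    ∃ u : Fin r → (Fin r → F), LinearIndependent F u ∧
      ∀ i : Fin l, ∃ s : Finset (Fin r), s.card = r - 1 ∧
        Submodule.span F (u '' ↑s) = W i := by
  choose w hw1 hw2 using auxW r l h2 hlr W hdim hint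
  have hwW : ∀ i j : Fin l, i ≠ j → w j ∈ W i := by
    intro i j hij
    exact biInf_le W (Finset.mem_erase.2 ⟨hij, Finset.mem_univ i⟩) (hw1 j)
  set V := ⨅ i, W i with hV
  have hVle : ∀ i, V ≤ W i := fun i => iInf_le W i
  let b : Basis (Fin (r - l)) F ↥V := (Module.finBasis F ↥V).reindex (finCongr hint)
  let v : (Fin (r - l) ⊕ Fin l) → (Fin r → F) := Sum.elim (fun k => (b k : Fin r → F)) w
  have hvi : LinearIndependent F v := by
    rw [Fintype.linearIndependent_iff]
    intro g hg
    rw [Fintype.sum_sum_type] at hg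
    have hzero : ∀ i, g (Sum.inr i) = 0 := by
      intro i
      by_contra hne
      apply hw2 i
      have hA : (∑ k, g (Sum.inl k) • v (Sum.inl k)) ∈ W i :=
        Submodule.sum_mem _ (fun k _ => Submodule.smul_mem _ _ (hVle i (b k).2))
      have hB : (∑ j ∈ Finset.univ.erase i, g (Sum.inr j) • v (Sum.inr j)) ∈ W i :=
        Submodule.sum_mem _ (fun j hj => Submodule.smul_mem _ _
          (hwW i j (Ne.symm (Finset.mem_erase.1 hj).1)))
      have hsum : (∑ k, g (Sum.inl k) • v (Sum.inl k)) +
          (g (Sum.inr i) • v (Sum.inr i) +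
            ∑ j ∈ Finset.univ.erase i, g (Sum.inr j) • v (Sum.inr j)) = 0 := by
        rw [← Finset.add_sum_erase _ _ (Finset.mem_univ i)] at hg
        exact hg
      have hx : g (Sum.inr i) • v (Sum.inr i) =
          -((∑ k, g (Sum.inl k) • v (Sum.inl k)) +
            ∑ j ∈ Finset.univ.erase i, g (Sum.inr j) • v (Sum.inr j)) := by
        linear_combination hsum
      have hmem : g (Sum.inr i) • v (Sum.inr i) ∈ W i := by
        rw [hx]; exact Submodule.neg_mem _ (Submodule.add_mem _ hA hB)
      exact (Submodule.smul_mem_iff _ hne).1 hmem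
    have hb0 : (∑ k, g (Sum.inl k) • b k) = 0 := by
      have hcoe : ((∑ k, g (Sum.inl k) • b k : ↥V) : Fin r → F) = 0 := by
        push_cast
        simpa [hzero, v] using hg
      exact Subtype.coe_injective (by simpa using hcoe)
    have hlk := Fintype.linearIndependent_iff.1 b.linearIndependent _ hb0
    rintro (k | i)
    · exact hlk k
    · exact hzero i
  let e : (Fin (r - l) ⊕ Fin l) ≃ Fin r :=
    finSumFinEquiv.trans (finCongr (Nat.sub_add_cancel hlr))
  refine ⟨v ∘ e.symm, hvi.comp e.symm e.symm.injective, ?_⟩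
  intro i
  refine ⟨Finset.univ.erase (e (Sum.inr i)), ?_, ?_⟩
  · rw [Finset.card_erase_of_mem (Finset.mem_univ _), Finset.card_univ, Fintype.card_fin]
  · have himg : (v ∘ e.symm) '' ↑(Finset.univ.erase (e (Sum.inr i))) =
        v '' {Sum.inr i}ᶜ := by
      have hset : (e.symm) '' ↑(Finset.univ.erase (e (Sum.inr i))) =
          ({Sum.inr i}ᶜ : Set (Fin (r - l) ⊕ Fin l)) := by
        ext x
        simp only [Finset.coe_erase, Finset.coe_univ, Set.mem_image, Set.mem_diff,
          Set.mem_univ, true_and, Set.mem_singleton_iff, Set.mem_compl_iff]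
        constructor
        · rintro ⟨y, hy, rfl⟩
          intro hx
          exact hy (by rw [← Equiv.apply_symm_apply e y, hx])
        · intro hx
          exact ⟨e x, fun h => hx (e.injective (by simpa using h)), by simp⟩
      rw [Set.image_comp, hset]
    rw [himg]
    have hle : Submodule.span F (v '' {Sum.inr i}ᶜ) ≤ W i := by
      rw [Submodule.span_le]
      rintro x ⟨y, hy, rfl⟩
      cases y with
      | inl k => exact hVle i (b k).2
      | inr j =>
          refine hwW i j fun h => ?_
          exact hy (by simp [h])
    apply Submodule.eq_of_le_of_finrank_eq hle
    have hind : LinearIndependent F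
        (fun x : ({Sum.inr i}ᶜ : Set (Fin (r - l) ⊕ Fin l)) => v ↑x) :=
      hvi.comp _ Subtype.coe_injective
    have hfr := finrank_span_eq_card hind
    rw [← Set.image_eq_range] at hfr
    rw [hfr, hdim i]
    rw [Fintype.card_compl_set]
    simp [Nat.sub_add_cancel hlr]
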